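/- Let F be Hurwitz with FᵀP + PF = −2Υ, Υ ≻ 0, P ≻ 0, and let B ∈ ℝⁿˣⁿ, g ∈ ℝⁿ, M = CF⁻¹, k_p, k_i > 0, and sat the saturation to [u̲, ū] with u_ss ∈ [u̲, ū]. Along solutions of the closed-loop system ẋ̃ = Fx̃ + (Bx̃ + g)v, ż̃ = −M(Bx̃ + g)v, with v = sat(u_ss + φ̃) − u_ss and φ̃ = −(k_p x̃ᵀP − k_i z̃ M)(Bx̃ + g), the Lyapunov function V = k_p x̃ᵀPx̃ + k_i z̃² satisfies V̇ ≤ −2k_p x̃ᵀΥx̃ ≤ 0. -/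

import Mathlib

open Matrix

noncomputable def sat (ul ub s : ℝ) : ℝ :=
  if s ≥ ub then ub else if s ≤ ul then ul else s

/-- A real square matrix is Hurwitz if all its (complex) eigenvalues
have strictly negative real part. -/
def IsHurwitz {n : ℕ} (M : Matrix (Fin n) (Fin n) ℝ) : Prop :=
  ∀ μ ∈ spectrum ℂ (M.map (algebraMap ℝ ℂ)), μ.re < 0

lemma sat_ineq (ul ub uss s : ℝ) (h1 : ul ≤ uss) (h2 : uss ≤ ub) :
    0 ≤ s * (sat ul ub (uss + s) - uss) := by
  unfold sat
  split_ifs with h3 h4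
  · nlinarith
  · nlinarith
  · nlinarith [sq_nonneg s]

lemma quad_swap {n : ℕ} (A : Matrix (Fin n) (Fin n) ℝ) (u y : Fin n → ℝ) :
    (A *ᵥ u) ⬝ᵥ y = u ⬝ᵥ (Aᵀ *ᵥ y) := by
  calc (A *ᵥ u) ⬝ᵥ y = y ⬝ᵥ (A *ᵥ u) := dotProduct_comm _ _
    _ = (y ᵥ* A) ⬝ᵥ u := dotProduct_mulVec _ _ _
    _ = u ⬝ᵥ (y ᵥ* A) := dotProduct_comm _ _
    _ = u ⬝ᵥ (Aᵀ *ᵥ y) := by rw [mulVec_transpose]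

theorem stmt_18 {n : ℕ} (F B P Υ : Matrix (Fin n) (Fin n) ℝ)
    (g C M : Fin n → ℝ) (kp ki ul ub uss : ℝ)
    (hF : IsHurwitz F) (hP : P.PosDef) (hΥ : Υ.PosDef)
    (hLyap : Fᵀ * P + P * F = -((2 : ℝ) • Υ))
    (hM : M = C ᵥ* F⁻¹) (hkp : 0 < kp) (hki : 0 < ki)
    (hul : ul ≤ ub) (huss : uss ∈ Set.Icc ul ub)
    (x : ℝ → Fin n → ℝ) (z : ℝ → ℝ)
    (φt v : ℝ → ℝ)
    (hφ : ∀ t : ℝ, φt t =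
      -(kp * ((x t) ⬝ᵥ P.mulVec (B.mulVec (x t) + g)) - ki * z t * (M ⬝ᵥ (B.mulVec (x t) + g))))
    (hv : ∀ t : ℝ, v t = sat ul ub (uss + φt t) - uss)
    (hx : ∀ t : ℝ, HasDerivAt x (F.mulVec (x t) + v t • (B.mulVec (x t) + g)) t)
    (hz : ∀ t : ℝ, HasDerivAt z (-(v t * (M ⬝ᵥ (B.mulVec (x t) + g)))) t) :
    ∀ t : ℝ, ∃ d : ℝ,
      HasDerivAt (fun τ => kp * ((x τ) ⬝ᵥ P.mulVec (x τ)) + ki * (z τ) ^ 2) d t ∧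
      d ≤ -2 * kp * ((x t) ⬝ᵥ Υ.mulVec (x t)) ∧
      -2 * kp * ((x t) ⬝ᵥ Υ.mulVec (x t)) ≤ 0 := by
  intro t
  have hxi : ∀ i, HasDerivAt (fun τ => x τ i)
      ((F.mulVec (x t) + v t • (B.mulVec (x t) + g)) i) t := hasDerivAt_pi.1 (hx t)
  have hquad : HasDerivAt (fun τ => (x τ) ⬝ᵥ P.mulVec (x τ))
      ((F.mulVec (x t) + v t • (B.mulVec (x t) + g)) ⬝ᵥ P.mulVec (x t)
        + (x t) ⬝ᵥ P.mulVec (F.mulVec (x t) + v t • (B.mulVec (x t) + g))) t := by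
    have h : HasDerivAt (fun τ => ∑ i, ∑ j, x τ i * (P i j * x τ j))
        (∑ i, ∑ j, ((F.mulVec (x t) + v t • (B.mulVec (x t) + g)) i * (P i j * x t j)
          + x t i * (P i j * (F.mulVec (x t) + v t • (B.mulVec (x t) + g)) j))) t := by
      apply HasDerivAt.fun_sum; intro i _
      apply HasDerivAt.fun_sum; intro j _
      exact (hxi i).mul ((hxi j).const_mul (P i j))
    convert h using 1
    · ext τ; simp [dotProduct, mulVec, Finset.mul_sum]
    · simp [dotProduct, mulVec, Finset.mul_sum, Finset.sum_add_distrib]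
  have hz2 : HasDerivAt (fun τ => (z τ) ^ 2)
      (2 * z t * (-(v t * (M ⬝ᵥ (B.mulVec (x t) + g))))) t := by
    have h := (hz t).fun_pow 2
    refine h.congr_deriv ?_
    push_cast
    ring
  have hV := ((hquad.const_mul kp)).add (hz2.const_mul ki)
  refine ⟨_, hV, ?_, ?_⟩
  · have hPsymm : Pᵀ = P := hP.1.eq
    set y := x t with hy
    set w : Fin n → ℝ := B.mulVec (x t) + g with hw
    have h1 : (F *ᵥ y) ⬝ᵥ (P *ᵥ y) = y ⬝ᵥ ((Fᵀ * P) *ᵥ y) := by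
      rw [quad_swap, mulVec_mulVec]
    have h2 : w ⬝ᵥ (P *ᵥ y) = y ⬝ᵥ (P *ᵥ w) := by
      rw [dotProduct_comm, quad_swap, hPsymm]
    have h3 : y ⬝ᵥ (P *ᵥ (F *ᵥ y)) = y ⬝ᵥ ((P * F) *ᵥ y) := by rw [mulVec_mulVec]
    have h4 : y ⬝ᵥ ((Fᵀ * P) *ᵥ y) + y ⬝ᵥ ((P * F) *ᵥ y) = -2 * (y ⬝ᵥ (Υ *ᵥ y)) := by
      rw [← dotProduct_add, ← add_mulVec, hLyap]
      simp only [neg_mulVec, smul_mulVec, dotProduct_neg, dotProduct_smul, smul_eq_mul]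
      ring
    have key : (F *ᵥ y + v t • w) ⬝ᵥ (P *ᵥ y) + y ⬝ᵥ (P *ᵥ (F *ᵥ y + v t • w))
        = -2 * (y ⬝ᵥ (Υ *ᵥ y)) + 2 * v t * (y ⬝ᵥ (P *ᵥ w)) := by
      rw [add_dotProduct, smul_dotProduct, mulVec_add, dotProduct_add,
        mulVec_smul, dotProduct_smul, h1, h2, h3]
      simp only [smul_eq_mul]
      linarith
    have hφt := hφ t
    rw [← hy, ← hw] at hφt
    have hφw : kp * (y ⬝ᵥ (P *ᵥ w)) - ki * z t * (M ⬝ᵥ w) = -(φt t) := by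
      rw [hφt]; ring
    have hsat : 0 ≤ (φt t) * (v t) := by
      rw [hv t]; exact sat_ineq ul ub uss (φt t) huss.1 huss.2
    have hkey2 : 2 * v t * (kp * (y ⬝ᵥ (P *ᵥ w))) - 2 * (ki * z t * (M ⬝ᵥ w)) * v t
        = -2 * (φt t * v t) := by linear_combination 2 * v t * hφw
    rw [key]
    linarith [hsat, hkey2]
  · have h := hΥ.posSemidef.re_dotProduct_nonneg (x t)
    have h0 : 0 ≤ (x t) ⬝ᵥ Υ.mulVec (x t) := by simpa using h
    nlinarith
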